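/- For M = [[A, iA],[iA, −A]] with A an n×n complex symmetric matrix (Aᵗ = A), one has trace([M, Mᴴ]²) = 32·trace((AᴴA)²) and trace(MᴴM) = 4·trace(AᴴA); consequently −trace([M,Mᴴ]²)/(trace(MᴴM))² lies in [−2, −2/n] for all nonzero such M. -/

import Mathlib

open Matrix

private lemma trace_fromBlocks' {n : ℕ} (A B C D : Matrix (Fin n) (Fin n) ℂ) :
    (fromBlocks A B C D).trace = A.trace + D.trace := by
  simp [Matrix.trace, Matrix.diag, Fintype.sum_sum_type]

theorem stmt18 (n : ℕ) (hn : 1 ≤ n) (A : Matrix (Fin n) (Fin n) ℂ)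
    (hsymm : Aᵀ = A) :
    let M : Matrix (Fin n ⊕ Fin n) (Fin n ⊕ Fin n) ℂ :=
      Matrix.fromBlocks A (Complex.I • A) (Complex.I • A) (-A)
    ((M * Mᴴ - Mᴴ * M) * (M * Mᴴ - Mᴴ * M)).trace =
        32 * ((Aᴴ * A) * (Aᴴ * A)).trace ∧
    (Mᴴ * M).trace = 4 * (Aᴴ * A).trace ∧
    (A ≠ 0 →
      -2 ≤ -(((M * Mᴴ - Mᴴ * M) * (M * Mᴴ - Mᴴ * M)).trace.re) /
            ((Mᴴ * M).trace.re) ^ 2 ∧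
      -(((M * Mᴴ - Mᴴ * M) * (M * Mᴴ - Mᴴ * M)).trace.re) /
            ((Mᴴ * M).trace.re) ^ 2 ≤ -2 / (n : ℝ)) := by
  intro M
  set P : Matrix (Fin n) (Fin n) ℂ := A * Aᴴ with hP
  set Q : Matrix (Fin n) (Fin n) ℂ := Aᴴ * A with hQ
  have h1 : M * Mᴴ = fromBlocks ((2:ℂ) • P) ((-2*Complex.I) • P)
      ((2*Complex.I) • P) ((2:ℂ) • P) := by
    simp only [M, hP, fromBlocks_conjTranspose, Matrix.conjTranspose_smul, Complex.star_def,
      Complex.conj_I, fromBlocks_multiply, smul_mul_assoc, mul_smul_comm, smul_smul,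
      Matrix.neg_mul, Matrix.mul_neg, conjTranspose_neg]
    rw [Matrix.fromBlocks_inj]
    refine ⟨?_,?_,?_,?_⟩ <;> (match_scalars <;> simp [Complex.I_sq] <;> ring)
  have h2 : Mᴴ * M = fromBlocks ((2:ℂ) • Q) ((2*Complex.I) • Q)
      ((-2*Complex.I) • Q) ((2:ℂ) • Q) := by
    simp only [M, hQ, fromBlocks_conjTranspose, Matrix.conjTranspose_smul, Complex.star_def,
      Complex.conj_I, fromBlocks_multiply, smul_mul_assoc, mul_smul_comm, smul_smul,
      Matrix.neg_mul, Matrix.mul_neg, conjTranspose_neg]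
    rw [Matrix.fromBlocks_inj]
    refine ⟨?_,?_,?_,?_⟩ <;> (match_scalars <;> simp [Complex.I_sq] <;> ring)
  have key : (P * P).trace = (Q * Q).trace := by
    rw [show P * P = A * (Aᴴ * A * Aᴴ) by rw [hP]; noncomm_ring,
      trace_mul_comm, show Aᴴ * A * Aᴴ * A = Q * Q by rw [hQ]; noncomm_ring]
  have keyPQ : (Q * P).trace = (P * Q).trace := trace_mul_comm Q P
  have part1 : ((M * Mᴴ - Mᴴ * M) * (M * Mᴴ - Mᴴ * M)).trace =
      32 * ((Aᴴ * A) * (Aᴴ * A)).trace := by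
    rw [h1, h2, ← hQ]
    have hsub : fromBlocks ((2:ℂ) • P) ((-2*Complex.I) • P) ((2*Complex.I) • P) ((2:ℂ) • P) -
        fromBlocks ((2:ℂ) • Q) ((2*Complex.I) • Q) ((-2*Complex.I) • Q) ((2:ℂ) • Q) =
        fromBlocks ((2:ℂ) • P - (2:ℂ) • Q) ((-2*Complex.I) • P - (2*Complex.I) • Q)
          ((2*Complex.I) • P - (-2*Complex.I) • Q) ((2:ℂ) • P - (2:ℂ) • Q) := by
      ext (i|i) (j|j) <;> simp [fromBlocks]
    rw [hsub, fromBlocks_multiply, trace_fromBlocks']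
    simp only [Matrix.sub_mul, Matrix.mul_sub, smul_mul_assoc, mul_smul_comm, smul_smul,
      trace_add, trace_sub, trace_smul, smul_eq_mul]
    rw [keyPQ]
    linear_combination (16 : ℂ) * key + (Complex.I_sq) * ((-8:ℂ) * (P*P).trace - (8:ℂ) * (Q*Q).trace - (8:ℂ)*(P*Q).trace - (8:ℂ)*(P*Q).trace)
  have part2 : (Mᴴ * M).trace = 4 * ((Aᴴ * A)).trace := by
    rw [h2, trace_fromBlocks', ← hQ]
    simp only [trace_smul, smul_eq_mul]
    ring
  refine ⟨part1, part2, ?_⟩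
  intro hA
  set t : ℝ := ((Aᴴ * A).trace).re with ht
  set s : ℝ := (((Aᴴ * A) * (Aᴴ * A)).trace).re with hs
  have hre1 : ((M * Mᴴ - Mᴴ * M) * (M * Mᴴ - Mᴴ * M)).trace.re = 32 * s := by
    rw [part1]; simp [Complex.mul_re, hs]
  have hre2 : (Mᴴ * M).trace.re = 4 * t := by
    rw [part2]; simp [Complex.mul_re, ht]
  have hQapply : ∀ i j, (Aᴴ * A) i j = ∑ k, (starRingEnd ℂ) (A k i) * A k j := by
    intro i j
    simp [Matrix.mul_apply, Matrix.conjTranspose_apply]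
  have htsum : t = ∑ i, ((Aᴴ * A) i i).re := by
    rw [ht]; simp [Matrix.trace, Matrix.diag, Complex.re_sum]
  have hdiag : ∀ i, ((Aᴴ * A) i i).re = ∑ k, Complex.normSq (A k i) := by
    intro i
    rw [hQapply i i]
    simp [Complex.re_sum, Complex.normSq_apply, Complex.mul_re]
  have hdiag_nonneg : ∀ i, 0 ≤ ((Aᴴ * A) i i).re := by
    intro i; rw [hdiag]
    exact Finset.sum_nonneg fun k _ => Complex.normSq_nonneg _
  have ht_pos : 0 < t := by
    obtain ⟨k, i, hki⟩ : ∃ k i, A k i ≠ 0 := by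
      by_contra h
      push_neg at h
      exact hA (by ext k i; exact h k i)
    rw [htsum]
    apply Finset.sum_pos' (fun i _ => hdiag_nonneg i)
    refine ⟨i, Finset.mem_univ i, ?_⟩
    rw [hdiag]
    apply Finset.sum_pos' (fun k _ => Complex.normSq_nonneg _)
    exact ⟨k, Finset.mem_univ k, by simpa [Complex.normSq_pos] using hki⟩
  have hherm : ∀ i j, (Aᴴ * A) j i = (starRingEnd ℂ) ((Aᴴ * A) i j) := by
    intro i j
    conv_lhs => rw [← (Matrix.isHermitian_conjTranspose_mul_self A).eq]
    rfl
  have hssum : s = ∑ i, ∑ j, Complex.normSq ((Aᴴ * A) i j) := by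
    rw [hs, Matrix.trace]
    simp only [Matrix.diag, Complex.re_sum]
    refine Finset.sum_congr rfl fun i _ => ?_
    rw [Matrix.mul_apply, Complex.re_sum]
    refine Finset.sum_congr rfl fun j _ => ?_
    rw [hherm i j, Complex.mul_conj]
    simp
  have hCS : ∀ i j, Complex.normSq ((Aᴴ * A) i j) ≤ ((Aᴴ * A) i i).re * ((Aᴴ * A) j j).re := by
    intro i j
    let f : EuclideanSpace ℂ (Fin n) := WithLp.toLp 2 (fun k => A k i)
    let g : EuclideanSpace ℂ (Fin n) := WithLp.toLp 2 (fun k => A k j)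
    have hinner : (inner ℂ f g : ℂ) = (Aᴴ * A) i j := by
      rw [hQapply]
      simp only [PiLp.inner_apply, RCLike.inner_apply, f, g, mul_comm]
    have hf : ‖f‖ ^ 2 = ((Aᴴ * A) i i).re := by
      rw [← inner_self_eq_norm_sq (𝕜 := ℂ)]
      have : (inner ℂ f f : ℂ) = (Aᴴ * A) i i := by
        rw [hQapply]
        simp only [PiLp.inner_apply, RCLike.inner_apply, f, mul_comm]
      rw [this]; rfl
    have hg : ‖g‖ ^ 2 = ((Aᴴ * A) j j).re := by
      rw [← inner_self_eq_norm_sq (𝕜 := ℂ)]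
      have : (inner ℂ g g : ℂ) = (Aᴴ * A) j j := by
        rw [hQapply]
        simp only [PiLp.inner_apply, RCLike.inner_apply, g, mul_comm]
      rw [this]; rfl
    have h := norm_inner_le_norm (𝕜 := ℂ) f g
    calc Complex.normSq ((Aᴴ * A) i j) = ‖(Aᴴ * A) i j‖ ^ 2 := by
          rw [← Complex.sq_norm]
      _ = ‖(inner ℂ f g : ℂ)‖ ^ 2 := by rw [hinner]
      _ ≤ (‖f‖ * ‖g‖) ^ 2 := by
          apply pow_le_pow_left₀ (norm_nonneg _) h
      _ = ((Aᴴ * A) i i).re * ((Aᴴ * A) j j).re := by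
          rw [mul_pow, hf, hg]
  have hs_le : s ≤ t ^ 2 := by
    rw [hssum, htsum, sq, Finset.sum_mul_sum]
    exact Finset.sum_le_sum fun i _ => Finset.sum_le_sum fun j _ => hCS i j
  have hts : t ^ 2 ≤ n * s := by
    calc t ^ 2 ≤ n * ∑ i, ((Aᴴ * A) i i).re ^ 2 := by
          rw [htsum]
          simpa using sq_sum_le_card_mul_sum_sq (s := Finset.univ)
            (f := fun i => ((Aᴴ * A) i i).re)
      _ ≤ n * s := by
          gcongr
          rw [hssum]
          apply Finset.sum_le_sum
          intro i _
          calc ((Aᴴ * A) i i).re ^ 2 ≤ Complex.normSq ((Aᴴ * A) i i) := by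
                rw [Complex.normSq_apply]; nlinarith [sq_nonneg ((Aᴴ * A) i i).im]
            _ ≤ ∑ j, Complex.normSq ((Aᴴ * A) i j) :=
                Finset.single_le_sum (fun j _ => Complex.normSq_nonneg _) (Finset.mem_univ i)
  rw [hre1, hre2]
  have hnpos : (0:ℝ) < n := by exact_mod_cast hn
  have h16 : ((4:ℝ)*t)^2 = 16*t^2 := by ring
  constructor
  · rw [h16, neg_div]
    have hle : 32*s/(16*t^2) ≤ 2 := by
      rw [div_le_iff₀ (by positivity)]
      nlinarith
    linarith
  · rw [h16, neg_div, show (-2:ℝ)/n = -(2/n) by ring, neg_le_neg_iff]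
    rw [div_le_div_iff₀ hnpos (by positivity)]
    nlinarith
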